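/- For each subset γ of A, e_γ ℂStyl(A) e_γ = ℂ e_γ; consequently each e_γ is a primitive idempotent of ℂStyl(A). -/

import Mathlib

noncomputable section

open FreeMonoid

/-- The defining relations of the stylic congruence: the Knuth (plactic)
relations together with the idempotent relations `a² ≡ a`. -/
inductive StylicRel (A : Type*) [LinearOrder A] : FreeMonoid A → FreeMonoid A → Prop
  | knuth1 {a b c : A} : a < b → b < c →
      StylicRel A (ofList [b, a, c]) (ofList [b, c, a])
  | knuth2 {a b c : A} : a < b → b < c →
      StylicRel A (ofList [a, c, b]) (ofList [c, a, b])
  | knuth3 {a b : A} : a < b →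
      StylicRel A (ofList [b, a, b]) (ofList [b, b, a])
  | knuth4 {a b : A} : a < b →
      StylicRel A (ofList [a, b, a]) (ofList [b, a, a])
  | idem (a : A) : StylicRel A (ofList [a, a]) (ofList [a])

/-- The stylic congruence on the free monoid `A*`. -/
def stylCon (A : Type*) [LinearOrder A] : Con (FreeMonoid A) := conGen (StylicRel A)

/-- The stylic monoid `Styl(A)`. -/
abbrev Styl (A : Type*) [LinearOrder A] := (stylCon A).Quotient

/-- The image of a letter `a` in the complex stylic algebra `ℂStyl(A)`. -/
def styGenC {A : Type*} [LinearOrder A] (a : A) : MonoidAlgebra ℂ (Styl A) :=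
  MonoidAlgebra.of ℂ (Styl A) ((stylCon A).mk' (FreeMonoid.of a))

/-- The idempotent `e_γ` of `ℂStyl(A)` associated with a subset `γ ⊆ A`. -/
def eIdemC {A : Type*} [LinearOrder A] [Fintype A] (γ : Finset A) :
    MonoidAlgebra ℂ (Styl A) :=
  (((γᶜ).sort (· ≤ ·)).map (fun a => 1 - styGenC a)).prod *
    ((γ.sort (· ≤ ·)).reverse.map styGenC).prod

namespace StylAux

variable {A : Type*} [LinearOrder A]

/-- The image of a letter in the stylic monoid. -/
def g (a : A) : Styl A := (stylCon A).mk' (FreeMonoid.of a)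

/-- The image of a word in the stylic monoid. -/
def W (w : List A) : Styl A := (w.map g).prod

lemma W_nil : W ([] : List A) = 1 := rfl

lemma W_cons (c : A) (w : List A) : W (c :: w) = g c * W w := by
  simp [W]

lemma W_append (u v : List A) : W (u ++ v) = W u * W v := by
  simp [W]

lemma mk_ofList (w : List A) : (stylCon A).mk' (ofList w) = W w := by
  induction w with
  | nil => simp [ofList_nil, W_nil, map_one]
  | cons c w ih => rw [ofList_cons, map_mul, ih, W_cons]; rfl

lemma rel_eq {u v : FreeMonoid A} (h : StylicRel A u v) :
    (stylCon A).mk' u = (stylCon A).mk' v := by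
  have : (u : (stylCon A).Quotient) = v := (Con.eq _).mpr (ConGen.Rel.of u v h)
  exact this

lemma g_idem (a : A) : g a * g a = g a := by
  have := rel_eq (StylicRel.idem a)
  rw [mk_ofList, mk_ofList] at this
  simpa [W_cons, W_nil, mul_one] using this

lemma k4A {m c : A} (h : m < c) : g m * (g c * g m) = g c * g m := by
  have := rel_eq (StylicRel.knuth4 h)
  rw [mk_ofList, mk_ofList] at this
  simp only [W_cons, W_nil, mul_one] at this
  rw [this, ← mul_assoc, mul_assoc, g_idem]

/-- core absorption: a minimal letter can be absorbed across a word. -/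
lemma absorb_core {m : A} : ∀ t : List A, (∀ c ∈ t, m ≤ c) →
    g m * (W t * g m) = W t * g m := by
  intro t
  induction t with
  | nil =>
    intro _
    simp [W_nil, g_idem]
  | cons c t ih =>
    intro ht
    have htc : ∀ x ∈ t, m ≤ x := fun x hx => ht x (List.mem_cons_of_mem _ hx)
    have hX := ih htc
    simp only [W_cons, mul_assoc]
    rcases eq_or_lt_of_le (ht c (List.mem_cons_self)) with rfl | hlt
    · rw [← mul_assoc, g_idem]
    · rw [← hX, ← mul_assoc (g c) (g m), ← mul_assoc (g m) (g c * g m), k4A hlt]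

/-- if `m` occurs in `y` and is minimal there, then `g m * W y = W y`. -/
lemma g_absorb {m : A} {y : List A} (hm : m ∈ y) (hy : ∀ c ∈ y, m ≤ c) :
    g m * W y = W y := by
  obtain ⟨u, t, rfl⟩ := List.append_of_mem hm
  have hu : ∀ c ∈ u, m ≤ c := fun c hc => hy c (by simp [hc])
  have h := absorb_core u hu
  calc g m * W (u ++ m :: t) = (g m * (W u * g m)) * W t := by
        rw [W_append, W_cons]; simp [mul_assoc]
    _ = (W u * g m) * W t := by rw [h]
    _ = W (u ++ m :: t) := by rw [W_append, W_cons]; simp [mul_assoc]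

/-- delete occurrences of the minimal letter `m` in `w`, in the presence of
a right factor containing `m`. -/
lemma W_filter {m : A} (w : List A) {p : List A} (hp : m ∈ p)
    (hw : ∀ c ∈ w, m ≤ c) (hpp : ∀ c ∈ p, m ≤ c) :
    W w * W p = W (w.filter (fun c => decide (c ≠ m))) * W p := by
  induction w with
  | nil => simp
  | cons c w ih =>
    have hwc : ∀ x ∈ w, m ≤ x := fun x hx => hw x (List.mem_cons_of_mem _ hx)
    by_cases hc : c = m
    · subst hc
      rw [W_cons, mul_assoc, ← W_append]
      have habs : g c * W (w ++ p) = W (w ++ p) := by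
        apply g_absorb (by simp [hp])
        intro x hx
        rcases List.mem_append.mp hx with h | h
        · exact hwc x h
        · exact hpp x h
      rw [habs, W_append, ih hwc]
      congr 2
      simp
    · have : (c :: w).filter (fun c => decide (c ≠ m)) =
          c :: w.filter (fun c => decide (c ≠ m)) := by
        simp [List.filter_cons, hc]
      rw [this, W_cons, W_cons, mul_assoc, mul_assoc, ih hwc]

end StylAux

namespace StylAux

variable {A : Type*} [LinearOrder A]

/-- algebra embedding of the monoid. -/
def ofm : Styl A →* MonoidAlgebra ℂ (Styl A) := MonoidAlgebra.of ℂ (Styl A)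

/-- The image of a word in the algebra. -/
def ofW (w : List A) : MonoidAlgebra ℂ (Styl A) := ofm (W w)

lemma styGenC_eq (a : A) : styGenC a = ofm (g a) := rfl

lemma ofW_nil : ofW ([] : List A) = 1 := by simp [ofW, W_nil, map_one]

lemma ofW_cons (c : A) (w : List A) : ofW (c :: w) = styGenC c * ofW w := by
  rw [ofW, W_cons, map_mul]; rfl

lemma ofW_append (u v : List A) : ofW (u ++ v) = ofW u * ofW v := by
  rw [ofW, W_append, map_mul]; rfl

lemma ofW_singleton (c : A) : ofW [c] = styGenC c := by
  show ofm (W [c]) = _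
  rw [W_cons, W_nil, mul_one]
  rfl

lemma Pprod_eq (l : List A) : (l.map styGenC).prod = ofW l := by
  induction l with
  | nil => simp [ofW_nil]
  | cons c l ih => simp [ofW_cons, ih]

/-- The product `∏ (1 - a)` over a list. -/
def Nprod (l : List A) : MonoidAlgebra ℂ (Styl A) :=
  (l.map (fun a => 1 - styGenC a)).prod

lemma Nprod_nil : Nprod ([] : List A) = 1 := rfl

lemma Nprod_cons (c : A) (l : List A) :
    Nprod (c :: l) = (1 - styGenC c) * Nprod l := by
  simp [Nprod]

section lists

variable {R : Type*} [Ring R]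

lemma list_sum_mul (L : List R) (x : R) : L.sum * x = (L.map (· * x)).sum := by
  induction L with
  | nil => simp
  | cons a L ih => simp [add_mul, ih]

lemma mul_list_sum (x : R) (L : List R) : x * L.sum = (L.map (x * ·)).sum := by
  induction L with
  | nil => simp
  | cons a L ih => simp [mul_add, ih]

end lists


lemma list_map_neg_sum {R : Type*} [Ring R] {α : Type*} (L : List α) (h : α → R) :
    (L.map (fun x => -(h x))).sum = -((L.map h).sum) := by
  induction L with
  | nil => simp
  | cons a L ih => simp [ih]; abel

/-- Expansion of `Nprod` as a signed sum over sublists. -/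
lemma Nprod_expand (l : List A) :
    Nprod l = (l.sublists'.map (fun s => ((-1 : ℂ) ^ s.length) • ofW s)).sum := by
  induction l with
  | nil => simp [Nprod_nil, ofW_nil]
  | cons a l ih =>
    rw [Nprod_cons, sub_mul, one_mul, ih, List.sublists'_cons, List.map_append,
      List.sum_append, List.map_map]
    have key : (l.sublists'.map
        ((fun s => ((-1 : ℂ) ^ s.length) • ofW s) ∘ List.cons a)).sum
        = -(styGenC a *
            (l.sublists'.map fun s => ((-1 : ℂ) ^ s.length) • ofW s).sum) := by
      rw [mul_list_sum, List.map_map, ← list_map_neg_sum]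
      apply congrArg List.sum
      apply List.map_congr_left
      intro s _
      simp only [Function.comp_apply, ofW_cons, List.length_cons, pow_succ,
        mul_neg_one, neg_smul, mul_smul_comm]
    rw [key, sub_eq_add_neg]

/-- Key kill lemma: left multiplication by a minimal letter occurring in `y`
fixes `Nprod l * ofW y`. -/
lemma key_kill {m : A} (l y : List A) (hl : ∀ c ∈ l, m ≤ c)
    (hy : ∀ c ∈ y, m ≤ c) (hm : m ∈ y) :
    styGenC m * (Nprod l * ofW y) = Nprod l * ofW y := by
  have h1 : Nprod l * ofW y
      = (l.sublists'.map (fun s => ((-1 : ℂ) ^ s.length) • ofW (s ++ y))).sum := by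
    rw [Nprod_expand, list_sum_mul, List.map_map]
    apply congrArg List.sum
    apply List.map_congr_left
    intro s _
    simp only [Function.comp_apply, smul_mul_assoc, ofW_append]
  rw [h1, mul_list_sum, List.map_map]
  apply congrArg List.sum
  apply List.map_congr_left
  intro s hs
  have hsl : ∀ c ∈ s, c ∈ l := fun c hc =>
    (List.mem_sublists'.mp hs).subset hc
  have habs : styGenC m * ofW (s ++ y) = ofW (s ++ y) := by
    rw [styGenC_eq, ofW, ← map_mul]
    congr 1
    apply g_absorb (by simp [hm])
    intro c hc
    rcases List.mem_append.mp hc with h | h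
    · exact hl c (hsl c h)
    · exact hy c h
  simp only [Function.comp_apply, mul_smul_comm, habs]

/-- The indicator character value of a word. -/
def chi (gam : Finset A) (w : List A) : ℂ :=
  (w.map (fun c => if c ∈ gam then (1 : ℂ) else 0)).prod

lemma chi_nil (gam : Finset A) : chi gam ([] : List A) = 1 := rfl

lemma chi_cons (gam : Finset A) (c : A) (w : List A) :
    chi gam (c :: w) = (if c ∈ gam then (1 : ℂ) else 0) * chi gam w := by
  simp [chi]

lemma chi_of_subset {gam : Finset A} {w : List A} (h : ∀ c ∈ w, c ∈ gam) :
    chi gam w = 1 := by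
  induction w with
  | nil => rfl
  | cons c w ih =>
    rw [chi_cons, if_pos (h c (List.mem_cons_self)), one_mul]
    exact ih fun x hx => h x (List.mem_cons_of_mem _ hx)

lemma chi_eq_zero {gam : Finset A} {w : List A} {m : A} (hm : m ∈ w)
    (hmg : m ∉ gam) : chi gam w = 0 := by
  induction w with
  | nil => simp at hm
  | cons c w ih =>
    rcases List.mem_cons.mp hm with rfl | h
    · rw [chi_cons, if_neg hmg, zero_mul]
    · rw [chi_cons, ih h, mul_zero]

lemma chi_filter {gam : Finset A} {m : A} (hm : m ∈ gam) (w : List A) :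
    chi gam w = chi (gam.erase m) (w.filter (fun c => decide (c ≠ m))) := by
  induction w with
  | nil => rfl
  | cons c w ih =>
    by_cases hc : c = m
    · subst hc
      have : (c :: w).filter (fun x => decide (x ≠ c)) =
          w.filter (fun x => decide (x ≠ c)) := by simp [List.filter_cons]
      rw [this, chi_cons, if_pos hm, one_mul, ih]
    · have : (c :: w).filter (fun x => decide (x ≠ m)) =
          c :: w.filter (fun x => decide (x ≠ m)) := by
        simp [List.filter_cons, hc]
      rw [this, chi_cons, chi_cons, ih]
      congr 1
      simp [Finset.mem_erase, hc]

/-- sorting a finset whose minimum is `m`. -/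
lemma sort_min_cons (s : Finset A) (m : A) (hm : m ∈ s)
    (hle : ∀ c ∈ s, m ≤ c) :
    s.sort (· ≤ ·) = m :: (s.erase m).sort (· ≤ ·) := by
  have hkey : ∀ {l1 l2 : List A}, l1.Perm l2 → l1.Pairwise (· ≤ ·) → l2.Pairwise (· ≤ ·) →
      l1 = l2 := fun p h1 h2 => List.Perm.eq_of_sortedLE h1.sortedLE h2.sortedLE p
  apply hkey
  · apply Multiset.coe_eq_coe.mp
    push_cast [Finset.sort_eq]
    rw [show ((m :: (s.erase m).sort (· ≤ ·) : List A) : Multiset A)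
        = m ::ₘ ((s.erase m).sort (· ≤ ·) : Multiset A) from rfl]
    rw [Finset.sort_eq, Finset.erase_val, Multiset.cons_erase hm]
  · exact Finset.pairwise_sort _ _
  · rw [List.pairwise_cons]
    exact ⟨fun b hb => hle b (Finset.mem_of_mem_erase (Finset.mem_sort _ |>.mp hb)),
      Finset.pairwise_sort _ _⟩

/-- The main key lemma: `N ⬝ w ⬝ P = χ(w) • (N ⬝ P)`. -/
lemma key (n : ℕ) : ∀ B gam : Finset A, gam ⊆ B → B.card ≤ n →
    ∀ w : List A, (∀ c ∈ w, c ∈ B) →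
    Nprod ((B \ gam).sort (· ≤ ·)) * ofW w * ofW ((gam.sort (· ≤ ·)).reverse)
      = chi gam w • (Nprod ((B \ gam).sort (· ≤ ·)) *
          ofW ((gam.sort (· ≤ ·)).reverse)) := by
  induction n with
  | zero =>
    intro B gam hsub hcard w hw
    have hB : B = ∅ := Finset.card_eq_zero.mp (Nat.le_zero.mp hcard)
    subst hB
    have hg : gam = ∅ := Finset.subset_empty.mp hsub
    subst hg
    match w with
    | [] => simp [chi_nil, Nprod_nil, ofW_nil]
    | c :: _ => exact absurd (hw c (List.mem_cons_self)) (by simp)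
  | succ n ih =>
    intro B gam hsub hcard w hw
    rcases B.eq_empty_or_nonempty with rfl | hne
    · have hg : gam = ∅ := Finset.subset_empty.mp hsub
      subst hg
      match w with
      | [] => simp [chi_nil, Nprod_nil, ofW_nil]
      | c :: _ => exact absurd (hw c (List.mem_cons_self)) (by simp)
    set m := B.min' hne with hm_def
    have hmB : m ∈ B := B.min'_mem hne
    have hmle : ∀ c ∈ B, m ≤ c := fun c hc => B.min'_le c hc
    have hcard' : (B.erase m).card ≤ n := by
      rw [Finset.card_erase_of_mem hmB]
      omega
    have hPmem : ∀ c ∈ (gam.sort (· ≤ ·)).reverse, c ∈ gam := by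
      intro c hc
      exact (Finset.mem_sort _).mp (List.mem_reverse.mp hc)
    by_cases hmg : m ∈ gam
    · -- m ∈ gam : strip m from w and recurse on erased sets
      have hsort : gam.sort (· ≤ ·) = m :: (gam.erase m).sort (· ≤ ·) :=
        sort_min_cons gam m hmg (fun c hc => hmle c (hsub hc))
      have hPl : (gam.sort (· ≤ ·)).reverse
          = ((gam.erase m).sort (· ≤ ·)).reverse ++ [m] := by
        rw [hsort, List.reverse_cons]
      have hNset : (B.erase m) \ (gam.erase m) = B \ gam := by
        ext x
        simp only [Finset.mem_sdiff, Finset.mem_erase]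
        constructor
        · rintro ⟨⟨hxm, hxB⟩, hxg⟩
          exact ⟨hxB, fun hx => hxg ⟨hxm, hx⟩⟩
        · rintro ⟨hxB, hxg⟩
          have hxm : x ≠ m := fun h => hxg (h ▸ hmg)
          exact ⟨⟨hxm, hxB⟩, fun hx => hxg hx.2⟩
      set w' := w.filter (fun c => decide (c ≠ m)) with hw'_def
      -- algebra version of the filter step
      have hfil : ofW w * ofW ((gam.sort (· ≤ ·)).reverse)
          = ofW w' * ofW ((gam.sort (· ≤ ·)).reverse) := by
        show ofm (W w) * ofm (W _) = ofm (W w') * ofm (W _)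
        rw [← map_mul, ← map_mul]
        congr 1
        apply W_filter
        · rw [List.mem_reverse, Finset.mem_sort]; exact hmg
        · exact fun c hc => hmle c (hw c hc)
        · exact fun c hc => hmle c (hsub (hPmem c hc))
      have hw' : ∀ c ∈ w', c ∈ B.erase m := by
        intro c hc
        rw [hw'_def, List.mem_filter] at hc
        refine Finset.mem_erase.mpr ⟨by simpa using hc.2, hw c hc.1⟩
      have hrec := ih (B.erase m) (gam.erase m)
        (Finset.erase_subset_erase _ hsub) hcard' w' hw'
      rw [hNset] at hrec
      have hPeq : ofW ((gam.sort (· ≤ ·)).reverse)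
          = ofW (((gam.erase m).sort (· ≤ ·)).reverse) * styGenC m := by
        rw [hPl, ofW_append, ofW_singleton]
      calc Nprod ((B \ gam).sort (· ≤ ·)) * ofW w *
            ofW ((gam.sort (· ≤ ·)).reverse)
          = Nprod ((B \ gam).sort (· ≤ ·)) *
            (ofW w' * ofW ((gam.sort (· ≤ ·)).reverse)) := by
            rw [mul_assoc, hfil]
        _ = (Nprod ((B \ gam).sort (· ≤ ·)) * ofW w' *
              ofW (((gam.erase m).sort (· ≤ ·)).reverse)) * styGenC m := by
            rw [hPeq]; simp only [mul_assoc]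
        _ = (chi (gam.erase m) w' • (Nprod ((B \ gam).sort (· ≤ ·)) *
              ofW (((gam.erase m).sort (· ≤ ·)).reverse))) * styGenC m := by
            rw [hrec]
        _ = chi gam w • (Nprod ((B \ gam).sort (· ≤ ·)) *
              ofW ((gam.sort (· ≤ ·)).reverse)) := by
            rw [chi_filter hmg w, ← hw'_def, smul_mul_assoc, hPeq]
            simp only [mul_assoc]
    · -- m ∉ gam
      have hmBg : m ∈ B \ gam := Finset.mem_sdiff.mpr ⟨hmB, hmg⟩
      have hNer : (B \ gam).erase m = (B.erase m) \ gam := by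
        ext x
        simp only [Finset.mem_sdiff, Finset.mem_erase]
        tauto
      have hsortN : (B \ gam).sort (· ≤ ·)
          = m :: ((B.erase m) \ gam).sort (· ≤ ·) := by
        rw [← hNer]
        exact sort_min_cons _ m hmBg
          (fun c hc => hmle c (Finset.mem_sdiff.mp hc).1)
      have hNsplit : Nprod ((B \ gam).sort (· ≤ ·))
          = (1 - styGenC m) * Nprod (((B.erase m) \ gam).sort (· ≤ ·)) := by
        rw [hsortN, Nprod_cons]
      by_cases hmw : m ∈ w
      · -- kill case
        have hchi : chi gam w = 0 := chi_eq_zero hmw hmg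
        rw [hchi, zero_smul, hNsplit]
        have hkill : styGenC m *
            (Nprod (((B.erase m) \ gam).sort (· ≤ ·)) *
              ofW (w ++ (gam.sort (· ≤ ·)).reverse))
            = Nprod (((B.erase m) \ gam).sort (· ≤ ·)) *
              ofW (w ++ (gam.sort (· ≤ ·)).reverse) := by
          apply key_kill
          · intro c hc
            have : c ∈ (B.erase m) \ gam := (Finset.mem_sort _).mp hc
            exact hmle c (Finset.mem_of_mem_erase (Finset.mem_sdiff.mp this).1)
          · intro c hc
            rcases List.mem_append.mp hc with h | h
            · exact hmle c (hw c h)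
            · exact hmle c (hsub (hPmem c h))
          · simp [hmw]
        calc (1 - styGenC m) * Nprod (((B.erase m) \ gam).sort (· ≤ ·)) *
              ofW w * ofW ((gam.sort (· ≤ ·)).reverse)
            = (1 - styGenC m) * (Nprod (((B.erase m) \ gam).sort (· ≤ ·)) *
                ofW (w ++ (gam.sort (· ≤ ·)).reverse)) := by
              rw [ofW_append]; simp only [mul_assoc]
          _ = Nprod (((B.erase m) \ gam).sort (· ≤ ·)) *
                ofW (w ++ (gam.sort (· ≤ ·)).reverse)
              - styGenC m * (Nprod (((B.erase m) \ gam).sort (· ≤ ·)) *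
                ofW (w ++ (gam.sort (· ≤ ·)).reverse)) := by
              rw [sub_mul, one_mul]
          _ = 0 := by rw [hkill, sub_self]
      · -- recurse with same gam, smaller B
        have hsub' : gam ⊆ B.erase m := Finset.subset_erase.mpr ⟨hsub, hmg⟩
        have hw2 : ∀ c ∈ w, c ∈ B.erase m := by
          intro c hc
          refine Finset.mem_erase.mpr ⟨fun h => hmw (h ▸ hc), hw c hc⟩
        have hrec := ih (B.erase m) gam hsub' hcard' w hw2
        rw [hNsplit]
        calc (1 - styGenC m) * Nprod (((B.erase m) \ gam).sort (· ≤ ·)) *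
              ofW w * ofW ((gam.sort (· ≤ ·)).reverse)
            = (1 - styGenC m) * (Nprod (((B.erase m) \ gam).sort (· ≤ ·)) *
                ofW w * ofW ((gam.sort (· ≤ ·)).reverse)) := by
              simp only [mul_assoc]
          _ = (1 - styGenC m) * (chi gam w •
                (Nprod (((B.erase m) \ gam).sort (· ≤ ·)) *
                  ofW ((gam.sort (· ≤ ·)).reverse))) := by rw [hrec]
          _ = chi gam w • ((1 - styGenC m) *
                Nprod (((B.erase m) \ gam).sort (· ≤ ·)) *
                ofW ((gam.sort (· ≤ ·)).reverse)) := by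
              rw [mul_smul_comm]; simp only [mul_assoc]

end StylAux

namespace StylAux

variable {A : Type*} [LinearOrder A]

/-- The character of the free monoid determined by `gam`. -/
def phi0 (gam : Finset A) : FreeMonoid A →* ℂ :=
  FreeMonoid.lift (fun a => if a ∈ gam then (1 : ℂ) else 0)

lemma phi0_ofList (gam : Finset A) (l : List A) :
    phi0 gam (ofList l) = chi gam l := by
  rw [phi0, FreeMonoid.lift_ofList]; rfl

lemma phi0_rel (gam : Finset A) {u v : FreeMonoid A} (h : StylicRel A u v) :
    phi0 gam u = phi0 gam v := by
  cases h with
  | @knuth1 a b c h1 h2 =>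
    rw [phi0_ofList, phi0_ofList]
    by_cases ha : a ∈ gam <;> by_cases hb : b ∈ gam <;> by_cases hc : c ∈ gam <;>
      simp [chi, ha, hb, hc]
  | @knuth2 a b c h1 h2 =>
    rw [phi0_ofList, phi0_ofList]
    by_cases ha : a ∈ gam <;> by_cases hb : b ∈ gam <;> by_cases hc : c ∈ gam <;>
      simp [chi, ha, hb, hc]
  | @knuth3 a b h1 =>
    rw [phi0_ofList, phi0_ofList]
    by_cases ha : a ∈ gam <;> by_cases hb : b ∈ gam <;> simp [chi, ha, hb]
  | @knuth4 a b h1 =>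
    rw [phi0_ofList, phi0_ofList]
    by_cases ha : a ∈ gam <;> by_cases hb : b ∈ gam <;> simp [chi, ha, hb]
  | idem a =>
    rw [phi0_ofList, phi0_ofList]
    by_cases ha : a ∈ gam <;> simp [chi, ha]

/-- The character of the stylic monoid determined by `gam`. -/
def phi (gam : Finset A) : Styl A →* ℂ :=
  Con.lift (stylCon A) (phi0 gam) (show stylCon A ≤ _ from Con.conGen_le.mpr fun x y h =>
    (Con.ker_rel _).mpr (phi0_rel gam h))

lemma phi_W (gam : Finset A) (w : List A) : phi gam (W w) = chi gam w := by
  rw [← mk_ofList, phi, Con.lift_mk', phi0_ofList]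

/-- The algebra character `ℂStyl(A) → ℂ` determined by `gam`. -/
def Phi (gam : Finset A) : MonoidAlgebra ℂ (Styl A) →ₐ[ℂ] ℂ :=
  MonoidAlgebra.lift ℂ ℂ (Styl A) (phi gam)

lemma Phi_ofW (gam : Finset A) (w : List A) : Phi gam (ofW w) = chi gam w := by
  show (MonoidAlgebra.lift ℂ ℂ (Styl A)) (phi gam) (MonoidAlgebra.of ℂ (Styl A) (W w)) = _
  rw [MonoidAlgebra.lift_of, phi_W]

lemma Phi_Nprod (gam : Finset A) (l : List A) (hl : ∀ c ∈ l, c ∉ gam) :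
    Phi gam (Nprod l) = 1 := by
  induction l with
  | nil => simp [Nprod_nil]
  | cons c l ih =>
    rw [Nprod_cons, map_mul, map_sub, map_one,
      ih (fun x hx => hl x (List.mem_cons_of_mem _ hx)), mul_one]
    have : Phi gam (styGenC c) = 0 := by
      rw [← ofW_singleton, Phi_ofW]
      simp [chi, hl c (List.mem_cons_self)]
    rw [this, sub_zero]

section FullAlphabet

variable [Fintype A] (gam : Finset A)

/-- `e_γ = N * P`. -/
lemma e_eq : eIdemC gam
    = Nprod ((gamᶜ).sort (· ≤ ·)) * ofW ((gam.sort (· ≤ ·)).reverse) := by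
  rw [eIdemC, Pprod_eq]; rfl

lemma keyAlg (x : MonoidAlgebra ℂ (Styl A)) :
    Nprod ((gamᶜ).sort (· ≤ ·)) * x * ofW ((gam.sort (· ≤ ·)).reverse)
      = Phi gam x • (Nprod ((gamᶜ).sort (· ≤ ·)) *
          ofW ((gam.sort (· ≤ ·)).reverse)) := by
  have hcompl : (gamᶜ : Finset A) = Finset.univ \ gam :=
    Finset.compl_eq_univ_sdiff gam
  induction x using MonoidAlgebra.induction_on with
  | of s =>
    obtain ⟨u, rfl⟩ := Con.mk'_surjective s
    have h1 : MonoidAlgebra.of ℂ (Styl A) ((stylCon A).mk' u)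
        = ofW u.toList := by
      show _ = ofm (W u.toList)
      rw [← mk_ofList, ofList_toList]
      rfl
    rw [h1, hcompl]
    have h2 := key (Finset.univ : Finset A).card Finset.univ gam
      (Finset.subset_univ gam) le_rfl u.toList (fun c _ => Finset.mem_univ c)
    rw [h2, Phi_ofW]
  | add x y hx hy =>
    rw [mul_add, add_mul, hx, hy, map_add, add_smul]
  | smul r x hx =>
    rw [mul_smul_comm, smul_mul_assoc, hx, map_smul, smul_assoc]

lemma Phi_N : Phi gam (Nprod ((gamᶜ).sort (· ≤ ·))) = 1 := by
  apply Phi_Nprod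
  intro c hc
  have : c ∈ gamᶜ := (Finset.mem_sort _).mp hc
  exact Finset.mem_compl.mp this

lemma Phi_P : Phi gam (ofW ((gam.sort (· ≤ ·)).reverse)) = 1 := by
  rw [Phi_ofW]
  apply chi_of_subset
  intro c hc
  exact (Finset.mem_sort _).mp (List.mem_reverse.mp hc)

lemma exe (x : MonoidAlgebra ℂ (Styl A)) :
    eIdemC gam * x * eIdemC gam = Phi gam x • eIdemC gam := by
  rw [e_eq]
  have hassoc : ∀ N P : MonoidAlgebra ℂ (Styl A),
      N * P * x * (N * P) = N * (P * x * N) * P := by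
    intro N P; simp only [mul_assoc]
  rw [hassoc, keyAlg gam (ofW ((gam.sort (· ≤ ·)).reverse) * x *
    Nprod ((gamᶜ).sort (· ≤ ·))), map_mul, map_mul, Phi_P, Phi_N, one_mul, mul_one]

lemma Phi_e : Phi gam (eIdemC gam) = 1 := by
  rw [e_eq, map_mul, Phi_N, Phi_P, mul_one]

end FullAlphabet

end StylAux

/-- Theorem `system`, part 3: `e_γ ℂStyl(A) e_γ = ℂ e_γ`;
consequently `e_γ` is a primitive idempotent of `ℂStyl(A)`: it is nonzero and
the only idempotents of `e_γ ℂStyl(A) e_γ` are `0` and `e_γ`. -/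
theorem eIdemC_primitive {A : Type*} [LinearOrder A] [Fintype A]
    (γ : Finset A) :
    (∀ x : MonoidAlgebra ℂ (Styl A), ∃ z : ℂ,
        eIdemC γ * x * eIdemC γ = z • eIdemC γ) ∧
    eIdemC γ ≠ 0 ∧
    (∀ f : MonoidAlgebra ℂ (Styl A), IsIdempotentElem f →
        (∃ x, f = eIdemC γ * x * eIdemC γ) → f = 0 ∨ f = eIdemC γ) := by
  have hne : eIdemC γ ≠ (0 : MonoidAlgebra ℂ (Styl A)) := by
    intro h
    have := StylAux.Phi_e γ
    rw [h, map_zero] at this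
    exact one_ne_zero this.symm
  have hee : eIdemC γ * eIdemC γ = eIdemC γ := by
    have := StylAux.exe γ 1
    rw [mul_one, map_one, one_smul] at this
    exact this
  refine ⟨fun x => ⟨StylAux.Phi γ x, StylAux.exe γ x⟩, hne, ?_⟩
  rintro f hf ⟨x, rfl⟩
  have hidem := hf.eq
  rw [StylAux.exe γ x] at hidem ⊢
  set z := StylAux.Phi γ x with hz
  rw [smul_mul_assoc, mul_smul_comm, hee, smul_smul] at hidem
  have h0 : (z * z - z) • eIdemC γ = 0 := by rw [sub_smul, hidem, sub_self]
  have hz2 : z * z = z := by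
    rcases smul_eq_zero.mp h0 with h | h
    · exact sub_eq_zero.mp h
    · exact absurd h hne
  have hfac : z * (z - 1) = 0 := by rw [mul_sub, mul_one, hz2, sub_self]
  rcases mul_eq_zero.mp hfac with h0' | h1'
  · left; rw [h0', zero_smul]
  · right; rw [sub_eq_zero.mp h1', one_smul]
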